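/- For the energy-based SBP-SAT semi-discretization of the 1D wave equation with homogeneous Dirichlet condition at x=0 and Neumann condition at x=1, the discrete energy E_H = uᵀAu + vᵀHv satisfies dE_H/dt = 2α(dₙᵀu)² + 2β(e₁ᵀv)², which is ≤ 0 when α ≤ 0 and β ≤ 0. -/

import Mathlib

open Matrix

lemma vmv_mulVec {m : Type*} [Fintype m] (a b x : m → ℝ) :
    (vecMulVec a b) *ᵥ x = (b ⬝ᵥ x) • a := by
  ext i
  simp [vecMulVec_apply, mulVec, dotProduct, Finset.mul_sum, mul_assoc, mul_comm, mul_left_comm]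

lemma dot_deriv {m : Type*} [Fintype m] (M : Matrix m m ℝ) {u w : ℝ → m → ℝ}
    {u0 w0 : m → ℝ} {t : ℝ} (hu : HasDerivAt u u0 t) (hw : HasDerivAt w w0 t) :
    HasDerivAt (fun s => u s ⬝ᵥ M *ᵥ w s)
      (u0 ⬝ᵥ M *ᵥ w t + u t ⬝ᵥ M *ᵥ w0) t := by
  have hu' := hasDerivAt_pi.mp hu
  have hw' := hasDerivAt_pi.mp hw
  have : ∀ s, u s ⬝ᵥ M *ᵥ w s = ∑ i, ∑ j, u s i * (M i j * w s j) := by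
    intro s; simp [dotProduct, mulVec, Finset.mul_sum]
  simp only [this]
  have key : HasDerivAt (fun s => ∑ i, ∑ j, u s i * (M i j * w s j))
      (∑ i, ∑ j, (u0 i * (M i j * w t j) + u t i * (M i j * w0 j))) t := by
    apply HasDerivAt.fun_sum; intro i _
    apply HasDerivAt.fun_sum; intro j _
    have := (hu' i).fun_mul (((hw' j)).const_mul (M i j)); simpa using this
  convert key using 1
  simp [dotProduct, mulVec, Finset.mul_sum, Finset.sum_add_distrib]

lemma dot_symm {m : Type*} [Fintype m] (M : Matrix m m ℝ) (hM : Mᵀ = M) (x y : m → ℝ) :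
    x ⬝ᵥ M *ᵥ y = y ⬝ᵥ M *ᵥ x := by
  nth_rewrite 1 [← hM]
  rw [mulVec_transpose, dotProduct_comm, ← dotProduct_mulVec]

theorem stmt5 (n : ℕ) (H A D : Matrix (Fin (n + 1)) (Fin (n + 1)) ℝ)
    (hH : H.PosDef) (hHdiag : H.IsDiag) (hA : A.PosSemidef)
    (d1 dn : Fin (n + 1) → ℝ) (b1 bn α β : ℝ)
    (hb1 : 0 < b1) (hbn : 0 < bn) (hα : α ≤ 0) (hβ : β ≤ 0)
    (hD : D = H⁻¹ * (-A - b1 • vecMulVec (Pi.single 0 1) d1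
        + bn • vecMulVec (Pi.single (Fin.last n) 1) dn))
    (u v u' v' : ℝ → Fin (n + 1) → ℝ)
    (hu : ∀ t, HasDerivAt u (u' t) t) (hv : ∀ t, HasDerivAt v (v' t) t)
    (heq1 : ∀ t, A *ᵥ (u' t - v t) =
        (b1 * v t 0) • d1 + (α * (dn ⬝ᵥ u t)) • dn)
    (heq2 : ∀ t, v' t = D *ᵥ u t
        - (bn * (dn ⬝ᵥ u t)) • (H⁻¹ *ᵥ Pi.single (Fin.last n) 1)
        + (β * v t 0) • (H⁻¹ *ᵥ Pi.single 0 1))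
    (E : ℝ → ℝ)
    (hE : ∀ t, E t = u t ⬝ᵥ (A *ᵥ u t) + v t ⬝ᵥ (H *ᵥ v t)) :
    ∀ t, HasDerivAt E (2 * α * (dn ⬝ᵥ u t) ^ 2 + 2 * β * (v t 0) ^ 2) t ∧
      2 * α * (dn ⬝ᵥ u t) ^ 2 + 2 * β * (v t 0) ^ 2 ≤ 0 := by
  have hAsymm : Aᵀ = A := hA.isHermitian
  have hHsymm : Hᵀ = H := hH.isHermitian
  have hHunit : IsUnit H.det := isUnit_iff_ne_zero.mpr hH.det_pos.ne'
  have hHinv : H * H⁻¹ = 1 := mul_nonsing_inv H hHunit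
  intro t
  constructor
  · -- derivative
    have hder : HasDerivAt E
        ((u' t ⬝ᵥ A *ᵥ u t + u t ⬝ᵥ A *ᵥ u' t) +
         (v' t ⬝ᵥ H *ᵥ v t + v t ⬝ᵥ H *ᵥ v' t)) t := by
      have h1 := dot_deriv A (hu t) (hu t)
      have h2 := dot_deriv H (hv t) (hv t)
      have := h1.add h2
      exact (this.congr_of_eventuallyEq (Filter.Eventually.of_forall fun s => (hE s)))
    convert hder using 1
    -- compute the value
    have e1 : u t ⬝ᵥ A *ᵥ u' t
        = u t ⬝ᵥ A *ᵥ v t + b1 * v t 0 * (d1 ⬝ᵥ u t) + α * (dn ⬝ᵥ u t) * (dn ⬝ᵥ u t) := by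
      have : A *ᵥ u' t = A *ᵥ (u' t - v t) + A *ᵥ v t := by
        rw [← mulVec_add]; congr 1; simp
      rw [this, heq1]
      simp [dotProduct_add, dotProduct_smul, dotProduct_comm (u t)]
      ring
    have e2 : v t ⬝ᵥ H *ᵥ v' t
        = - (u t ⬝ᵥ A *ᵥ v t) - b1 * v t 0 * (d1 ⬝ᵥ u t) + β * v t 0 * v t 0 := by
      rw [heq2]
      have hHD : H * D = -A - b1 • vecMulVec (Pi.single 0 1) d1
          + bn • vecMulVec (Pi.single (Fin.last n) 1) dn := by
        rw [hD, ← Matrix.mul_assoc, hHinv, Matrix.one_mul]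
      have hc : ∀ w : Fin (n+1) → ℝ, H *ᵥ (H⁻¹ *ᵥ w) = w := by
        intro w; rw [mulVec_mulVec, hHinv, one_mulVec]
      rw [mulVec_add, mulVec_sub, mulVec_mulVec, hHD, mulVec_smul, mulVec_smul, hc, hc]
      rw [dotProduct_add, dotProduct_sub, dotProduct_smul, dotProduct_smul]
      rw [add_mulVec, sub_mulVec, smul_mulVec, smul_mulVec, neg_mulVec,
        vmv_mulVec, vmv_mulVec]
      rw [dotProduct_add, dotProduct_sub, dotProduct_neg, dotProduct_smul, dotProduct_smul,
        dotProduct_smul, dotProduct_smul, dotProduct_single, dotProduct_single,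
        dot_symm A hAsymm (v t) (u t)]
      simp [smul_eq_mul]
      ring
    rw [dot_symm A hAsymm (u' t) (u t), dot_symm H hHsymm (v' t) (v t), e1, e2]
    ring
  · nlinarith [sq_nonneg (dn ⬝ᵥ u t), sq_nonneg (v t 0)]
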